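/- If f : [0,1] → ℝ is convex and p : [0,1] → ℝ is nonnegative and symmetric about 1/2, then for all a, b in the domain, ∫₀¹ p(t) · f((1-t)·a + t·b) dt ≤ (∫₀¹ p(t) dt) · (f(a) + f(b))/2. -/

import Mathlib

open MeasureTheory Set intervalIntegral

theorem fejer_right (f p : ℝ → ℝ)
    (hf : ConvexOn ℝ (Icc (0:ℝ) 1) f)
    (hp0 : ∀ t ∈ Icc (0:ℝ) 1, 0 ≤ p t)
    (hpsym : ∀ t ∈ Icc (0:ℝ) 1, p (1 - t) = p t)
    (hpint : IntervalIntegrable p volume 0 1)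
    (a b : ℝ) (ha : a ∈ Icc (0:ℝ) 1) (hb : b ∈ Icc (0:ℝ) 1)
    (hint : IntervalIntegrable (fun t => p t * f ((1 - t) * a + t * b)) volume 0 1) :
    (∫ t in (0:ℝ)..1, p t * f ((1 - t) * a + t * b)) ≤
      (∫ t in (0:ℝ)..1, p t) * ((f a + f b) / 2) := by
  set g : ℝ → ℝ := fun t => p t * f ((1 - t) * a + t * b) with hg
  set h : ℝ → ℝ := fun t => p t * f (t * a + (1 - t) * b) with hh
  have h01 : (0:ℝ) ≤ 1 := by norm_num
  have huIcc : uIcc (0:ℝ) 1 = Icc 0 1 := uIcc_of_le h01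
  have heq : EqOn (fun t => g (1 - t)) h (uIcc (0:ℝ) 1) := by
    rw [huIcc]
    intro t ht
    simp only [hg, hh]
    rw [hpsym t ht]
    ring_nf
  -- reflected integrability
  have hrefl : IntervalIntegrable (fun t => g (1 - t)) volume 0 1 := by
    have := (hint.comp_sub_left 1).symm
    simpa using this
  have hhint : IntervalIntegrable h volume 0 1 := by
    apply hrefl.congr
    intro t ht
    exact heq (uIoc_subset_uIcc ht)
  -- the two integrals are equal
  have hGH : (∫ t in (0:ℝ)..1, g t) = ∫ t in (0:ℝ)..1, h t := by
    have h1 : (∫ t in (0:ℝ)..1, g (1 - t)) = ∫ t in (0:ℝ)..1, g t := by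
      simp
    rw [← h1]
    exact intervalIntegral.integral_congr heq
  -- pointwise bound on [0,1]
  have hpt : ∀ t ∈ Icc (0:ℝ) 1, g t + h t ≤ p t * (f a + f b) := by
    intro t ht
    obtain ⟨ht0, ht1⟩ := ht
    have h1 : f ((1 - t) * a + t * b) ≤ (1 - t) * f a + t * f b := by
      have := hf.2 ha hb (by linarith : (0:ℝ) ≤ 1 - t) ht0 (by ring)
      simpa [smul_eq_mul] using this
    have h2 : f (t * a + (1 - t) * b) ≤ t * f a + (1 - t) * f b := by
      have := hf.2 ha hb ht0 (by linarith : (0:ℝ) ≤ 1 - t) (by ring)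
      simpa [smul_eq_mul] using this
    have hpn := hp0 t ⟨ht0, ht1⟩
    have := add_le_add (mul_le_mul_of_nonneg_left h1 hpn)
      (mul_le_mul_of_nonneg_left h2 hpn)
    simp only [hg, hh]
    nlinarith
  have hmono : (∫ t in (0:ℝ)..1, (g t + h t)) ≤ ∫ t in (0:ℝ)..1, p t * (f a + f b) := by
    apply intervalIntegral.integral_mono_on h01 (hint.add hhint)
      (hpint.mul_const _) hpt
  rw [intervalIntegral.integral_add hint hhint, ← hGH] at hmono
  rw [intervalIntegral.integral_mul_const] at hmono
  linarith
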